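/- For intervals J and J' in a bipartite type A quiver Q, the rank of the matrix M_J evaluated at the indecomposable representation I_{J'} equals the ceiling of (#(J ∩ J'))/2, where #(J ∩ J') denotes the number of arrows in the intersection of the two intervals. -/
import Mathlib

open Matrix

private lemma rank_submatrix_le' {m N : ℕ} (A : Matrix (Fin N) (Fin N) ℚ)
    (f g : Fin m → Fin N) : (A.submatrix f g).rank ≤ A.rank := by
  have h1 : ((1 : Matrix (Fin N) (Fin N) ℚ).submatrix f ⇑(Equiv.refl (Fin N))) * A
      = A.submatrix f id := by
    rw [Matrix.one_submatrix_mul]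
    simp
  have h2 : (A.submatrix f id) * ((1 : Matrix (Fin N) (Fin N) ℚ).submatrix
      ⇑(Equiv.refl (Fin N)) g) = A.submatrix f g := by
    rw [Matrix.mul_submatrix_one]
    simp
  calc (A.submatrix f g).rank
      = (((1 : Matrix (Fin N) (Fin N) ℚ).submatrix f ⇑(Equiv.refl (Fin N))) * A
        * ((1 : Matrix (Fin N) (Fin N) ℚ).submatrix ⇑(Equiv.refl (Fin N)) g)).rank := by
        rw [h1, h2]
    _ ≤ (((1 : Matrix (Fin N) (Fin N) ℚ).submatrix f ⇑(Equiv.refl (Fin N))) * A).rank :=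
        Matrix.rank_mul_le_left _ _
    _ ≤ A.rank := Matrix.rank_mul_le_right _ _

private lemma rank_le_of_cols {N m : ℕ} (A : Matrix (Fin N) (Fin N) ℚ)
    (g : Fin m → Fin N) (hg : Function.Injective g)
    (h : ∀ u v, (∀ j, g j ≠ v) → A u v = 0) : A.rank ≤ m := by
  have hA : A = (A.submatrix id g) * (Matrix.of fun j v => if g j = v then (1:ℚ) else 0) := by
    ext u v
    rw [Matrix.mul_apply]
    by_cases hv : ∃ j, g j = v
    · obtain ⟨j0, hj0⟩ := hv
      rw [Finset.sum_eq_single j0]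
      · simp [hj0]
      · intro j _ hj
        have : g j ≠ v := fun hgv => hj (hg (hgv.trans hj0.symm))
        simp [this]
      · simp
    · push_neg at hv
      rw [h u v hv]
      symm
      apply Finset.sum_eq_zero
      intro j _
      simp [hv j]
  have hle : A.rank ≤ (A.submatrix id g).rank := by
    conv_lhs => rw [hA]
    exact Matrix.rank_mul_le_left _ _
  exact hle.trans ((Matrix.rank_le_card_width _).trans (by simp))

private lemma rank_le_of_rows {N m : ℕ} (A : Matrix (Fin N) (Fin N) ℚ)
    (f : Fin m → Fin N) (hf : Function.Injective f)
    (h : ∀ u v, (∀ i, f i ≠ u) → A u v = 0) : A.rank ≤ m := by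
  rw [← Matrix.rank_transpose]
  exact rank_le_of_cols Aᵀ f hf (fun v u h' => h u v h')

private lemma rank_tri {m : ℕ} (S : Matrix (Fin m) (Fin m) ℚ)
    (hS : ∀ i j : Fin m, S i j = if j.val = i.val ∨ j.val + 1 = i.val then 1 else 0) :
    S.rank = m := by
  have hdet : S.det = 1 := by
    rw [Matrix.det_of_lowerTriangular S (by
      intro i j hij
      have : (i : ℕ) < j := hij
      rw [hS, if_neg (by omega)])]
    apply Finset.prod_eq_one
    intro i _
    rw [hS, if_pos (by omega)]
  have : IsUnit S := by
    rw [Matrix.isUnit_iff_isUnit_det, hdet]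
    exact isUnit_one
  rw [Matrix.rank_of_isUnit S this, Fintype.card_fin]

private lemma rank_tri' {m : ℕ} (S : Matrix (Fin m) (Fin m) ℚ)
    (hS : ∀ i j : Fin m, S i j = if j.val = i.val ∨ i.val + 1 = j.val then 1 else 0) :
    S.rank = m := by
  have hdet : S.det = 1 := by
    rw [Matrix.det_of_upperTriangular (M := S) (by
      intro i j hij
      have : (j : ℕ) < i := hij
      rw [hS, if_neg (by omega)])]
    apply Finset.prod_eq_one
    intro i _
    rw [hS, if_pos (by omega)]
  have : IsUnit S := by
    rw [Matrix.isUnit_iff_isUnit_det, hdet]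
    exact isUnit_one
  rw [Matrix.rank_of_isUnit S this, Fintype.card_fin]

private lemma main_rank {N L R : ℕ} (hLR : L ≤ R) (hRN : R + 2 ≤ N)
    (A : Matrix (Fin N) (Fin N) ℚ)
    (hA : ∀ u v : Fin N, A u v =
      if Even u.val ∧ ¬ Even v.val ∧ (u.val = v.val + 1 ∨ v.val = u.val + 1) ∧
         L ≤ min u.val v.val ∧ min u.val v.val ≤ R then 1 else 0) :
    A.rank = (R - L) / 2 + 1 := by
  set m := (R - L) / 2 + 1 with hm
  by_cases hL : L % 2 = 0
  · -- L even: rows L+2i (even), cols L+2j+1 (odd)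
    set f : Fin m → Fin N := fun i => ⟨L + 2 * i.val, by have := i.isLt; omega⟩ with hf
    set g : Fin m → Fin N := fun j => ⟨L + 2 * j.val + 1, by have := j.isLt; omega⟩ with hg
    have hS : ∀ i j : Fin m, (A.submatrix f g) i j
        = if j.val = i.val ∨ j.val + 1 = i.val then 1 else 0 := by
      intro i j
      have hi := i.isLt; have hj := j.isLt
      have hu : (f i).val = L + 2 * i.val := rfl
      have hv : (g j).val = L + 2 * j.val + 1 := rfl
      rw [Matrix.submatrix_apply, hA]
      simp only [hu, hv, Nat.even_iff]
      split_ifs with h1 h2 h2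
      · rfl
      · exfalso; omega
      · exfalso; omega
      · rfl
    have hlow : m ≤ A.rank := by
      calc m = (A.submatrix f g).rank := (rank_tri _ hS).symm
        _ ≤ A.rank := rank_submatrix_le' A f g
    have hup : A.rank ≤ m := by
      apply rank_le_of_cols A g
      · intro j1 j2 h12
        have : L + 2 * j1.val + 1 = L + 2 * j2.val + 1 := congrArg Fin.val h12
        exact Fin.ext (by omega)
      · intro u v hv
        rw [hA, if_neg]
        rintro ⟨h1, h2, h3, h4, h5⟩
        rw [Nat.even_iff] at h1 h2
        have hjm : (v.val - L - 1) / 2 < m := by omega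
        exact hv ⟨(v.val - L - 1) / 2, by omega⟩ (Fin.ext (by simp [hg]; omega))
    omega
  · -- L odd: rows L+2i+1 (even), cols L+2j (odd)
    set f : Fin m → Fin N := fun i => ⟨L + 2 * i.val + 1, by have := i.isLt; omega⟩ with hf
    set g : Fin m → Fin N := fun j => ⟨L + 2 * j.val, by have := j.isLt; omega⟩ with hg
    have hS : ∀ i j : Fin m, (A.submatrix f g) i j
        = if j.val = i.val ∨ i.val + 1 = j.val then 1 else 0 := by
      intro i j
      have hi := i.isLt; have hj := j.isLt
      have hu : (f i).val = L + 2 * i.val + 1 := rfl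
      have hv : (g j).val = L + 2 * j.val := rfl
      rw [Matrix.submatrix_apply, hA]
      simp only [hu, hv, Nat.even_iff]
      split_ifs with h1 h2 h2
      · rfl
      · exfalso; omega
      · exfalso; omega
      · rfl
    have hlow : m ≤ A.rank := by
      calc m = (A.submatrix f g).rank := (rank_tri' _ hS).symm
        _ ≤ A.rank := rank_submatrix_le' A f g
    have hup : A.rank ≤ m := by
      apply rank_le_of_rows A f
      · intro i1 i2 h12
        have : L + 2 * i1.val + 1 = L + 2 * i2.val + 1 := congrArg Fin.val h12
        exact Fin.ext (by omega)
      · intro u v hu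
        rw [hA, if_neg]
        rintro ⟨h1, h2, h3, h4, h5⟩
        rw [Nat.even_iff] at h1 h2
        have him : (u.val - L - 1) / 2 < m := by omega
        exact hu ⟨(u.val - L - 1) / 2, by omega⟩ (Fin.ext (by simp [hf]; omega))
    omega

theorem stmt0 (n a b a' b' : ℕ) (hab : a ≤ b) (hb : b < 2 * n)
    (hab' : a' ≤ b') (hb' : b' < 2 * n) :
    (Matrix.of (fun u v : Fin (2 * n + 1) =>
      if Even u.val ∧ ¬ Even v.val ∧ (u.val = v.val + 1 ∨ v.val = u.val + 1) ∧
         a ≤ min u.val v.val ∧ min u.val v.val ≤ b ∧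
         a' ≤ min u.val v.val ∧ min u.val v.val ≤ b'
      then (1 : ℚ) else 0)).rank
      = (min b b' + 1 - max a a' + 1) / 2 := by
  set L := max a a' with hL
  set R := min b b' with hR
  by_cases hLR : L ≤ R
  · have := main_rank (N := 2 * n + 1) hLR (by omega)
      (Matrix.of (fun u v : Fin (2 * n + 1) =>
        if Even u.val ∧ ¬ Even v.val ∧ (u.val = v.val + 1 ∨ v.val = u.val + 1) ∧
           a ≤ min u.val v.val ∧ min u.val v.val ≤ b ∧
           a' ≤ min u.val v.val ∧ min u.val v.val ≤ b'
        then (1 : ℚ) else 0))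
      (by
        intro u v
        have key : (Even u.val ∧ ¬ Even v.val ∧ (u.val = v.val + 1 ∨ v.val = u.val + 1) ∧
            a ≤ min u.val v.val ∧ min u.val v.val ≤ b ∧
            a' ≤ min u.val v.val ∧ min u.val v.val ≤ b')
            ↔ (Even u.val ∧ ¬ Even v.val ∧ (u.val = v.val + 1 ∨ v.val = u.val + 1) ∧
            L ≤ min u.val v.val ∧ min u.val v.val ≤ R) := by
          constructor
          · rintro ⟨h1, h2, h3, h4, h5, h6, h7⟩
            exact ⟨h1, h2, h3, by omega, by omega⟩
          · rintro ⟨h1, h2, h3, h4, h5⟩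
            exact ⟨h1, h2, h3, by omega, by omega, by omega, by omega⟩
        rw [Matrix.of_apply, if_congr key rfl rfl])
    rw [this]
    omega
  · have hz : (Matrix.of (fun u v : Fin (2 * n + 1) =>
        if Even u.val ∧ ¬ Even v.val ∧ (u.val = v.val + 1 ∨ v.val = u.val + 1) ∧
           a ≤ min u.val v.val ∧ min u.val v.val ≤ b ∧
           a' ≤ min u.val v.val ∧ min u.val v.val ≤ b'
        then (1 : ℚ) else 0)) = 0 := by
      ext u v
      rw [Matrix.of_apply, if_neg]
      · rfl
      rintro ⟨h1, h2, h3, h4, h5, h6, h7⟩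
      omega
    rw [hz, Matrix.rank_zero]
    omega
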